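/- arXiv:1906.06522 — 4 statements merged into one kernel-verified Lean document; each statement's English description precedes it below -/
import Mathlib

section
/- In the Poisson prior case, the first-order posterior intensity of the hidden process Φ given measurements Ξ = (z_1,…,z_m) equals μ¹_{Φ|Ξ}(x) = q_d + Σ_{k=1}^m p_d l_d(z_k|x) / ( l_c(z_k) + ∫_Λ p_d l_d(z_k|u) ν(du) ), where q_d = 1 − p_d. -/
open MeasureTheory Finset

variable {Λ : Type*} [MeasurableSpace Λ]

/-- The Janossy density `j^(m)_Ξ` of the measurement process restricted to the
configuration points indexed by `T ⊆ {1,…,m}`, for a hidden process with Janossy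
densities `jf`, clutter intensity `lc`, detection probability `pd` and
displacement likelihood `ld`. -/
noncomputable def jXi (ν : Measure Λ) [SigmaFinite ν] (lc : Λ → ℝ) (pd : ℝ)
    (ld : Λ → Λ → ℝ) (jf : (n : ℕ) → (Fin n → Λ) → ℝ)
    {m : ℕ} (z : Fin m → Λ) (T : Finset (Fin m)) : ℝ :=
  ∑' p : ℕ, ∑ S ∈ T.powerset,
    if hS : S.card ≤ p then
      (∏ j ∈ T \ S, lc (z j)) *
        ((1 - pd) ^ (p - S.card) / (Nat.factorial (p - S.card) : ℝ)) *
        ∫ u : Fin p → Λ, jf p u *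
          ∏ k : Fin S.card, pd * ld (z (S.orderEmbOfFin rfl k)) (u (Fin.castLE hS k))
          ∂Measure.pi (fun _ : Fin p => ν)
    else 0

/-- The first-order corrector term `Υ¹_{z_T}(x)`. -/
noncomputable def ups1 (ν : Measure Λ) [SigmaFinite ν] (lc : Λ → ℝ) (pd : ℝ)
    (ld : Λ → Λ → ℝ) (jf : (n : ℕ) → (Fin n → Λ) → ℝ)
    {m : ℕ} (z : Fin m → Λ) (T : Finset (Fin m)) (x : Λ) : ℝ :=
  ∑' p : ℕ, ∑ S ∈ T.powerset,
    if hS : S.card ≤ p then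
      (∏ j ∈ T \ S, lc (z j)) *
        ((1 - pd) ^ (p - S.card) / (Nat.factorial (p - S.card) : ℝ)) *
        ∫ u : Fin p → Λ, jf (p + 1) (Fin.snoc u x) *
          ∏ k : Fin S.card, pd * ld (z (S.orderEmbOfFin rfl k)) (u (Fin.castLE hS k))
          ∂Measure.pi (fun _ : Fin p => ν)
    else 0

/-- The second-order corrector term `Υ²_{z_T}(x,y)`. -/
noncomputable def ups2 (ν : Measure Λ) [SigmaFinite ν] (lc : Λ → ℝ) (pd : ℝ)
    (ld : Λ → Λ → ℝ) (jf : (n : ℕ) → (Fin n → Λ) → ℝ)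
    {m : ℕ} (z : Fin m → Λ) (T : Finset (Fin m)) (x y : Λ) : ℝ :=
  ∑' p : ℕ, ∑ S ∈ T.powerset,
    if hS : S.card ≤ p then
      (∏ j ∈ T \ S, lc (z j)) *
        ((1 - pd) ^ (p - S.card) / (Nat.factorial (p - S.card) : ℝ)) *
        ∫ u : Fin p → Λ, jf (p + 2) (Fin.snoc (Fin.snoc u x) y) *
          ∏ k : Fin S.card, pd * ld (z (S.orderEmbOfFin rfl k)) (u (Fin.castLE hS k))
          ∂Measure.pi (fun _ : Fin p => ν)
    else 0

set_option maxHeartbeats 1000000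

lemma prod_int_eq (ν : Measure Λ) [IsFiniteMeasure ν] (pd : ℝ) (ld : Λ → Λ → ℝ)
    {m : ℕ} (z : Fin m → Λ) (S : Finset (Fin m)) {p : ℕ} (hS : S.card ≤ p) :
    (∫ u : Fin p → Λ, ∏ k : Fin S.card,
        pd * ld (z (S.orderEmbOfFin rfl k)) (u (Fin.castLE hS k))
        ∂Measure.pi (fun _ : Fin p => ν))
      = (∏ j ∈ S, ∫ v, pd * ld (z j) v ∂ν) * (ν Set.univ).toReal ^ (p - S.card) := by
  letI : MeasureSpace Λ := ⟨ν⟩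
  set n := S.card with hn
  set s : Finset (Fin p) := Finset.univ.map (Fin.castLEEmb hS) with hs
  have hmem : ∀ i : Fin p, i ∈ s ↔ (i : ℕ) < n := by
    intro i
    simp only [hs, Finset.mem_map, Finset.mem_univ, true_and, Fin.castLEEmb, Function.Embedding.coeFn_mk]
    constructor
    · rintro ⟨a, rfl⟩; exact a.is_lt
    · intro h; exact ⟨⟨i, h⟩, by ext; rfl⟩
  set g : Fin p → Λ → ℝ := fun i v =>
    if h : (i : ℕ) < n then pd * ld (z (S.orderEmbOfFin rfl ⟨i, h⟩)) v else 1 with hg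
  have hcast : ∀ (k : Fin n) (v : Λ), g (Fin.castLE hS k) v
      = pd * ld (z (S.orderEmbOfFin rfl k)) v := by
    intro k v
    have hk : ((Fin.castLE hS k : Fin p) : ℕ) < n := k.is_lt
    simp only [hg, dif_pos hk]
    congr 1
  have key : ∀ (F : Fin p → ℝ), (∀ i : Fin p, ¬ (i : ℕ) < n → F i = 1) →
      ∏ i, F i = ∏ k : Fin n, F (Fin.castLE hS k) := by
    intro F hF
    rw [← Finset.prod_subset (Finset.subset_univ s)
      (fun i _ hi => hF i (fun h => hi ((hmem i).2 h)))]
    rw [hs, Finset.prod_map]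
    rfl
  have step1 : ∀ u : Fin p → Λ,
      (∏ k : Fin n, pd * ld (z (S.orderEmbOfFin rfl k)) (u (Fin.castLE hS k)))
        = ∏ i, g i (u i) := by
    intro u
    rw [key (fun i => g i (u i)) (fun i hi => by simp [hg, dif_neg hi])]
    exact Finset.prod_congr rfl fun k _ => (hcast k _).symm
  calc (∫ u : Fin p → Λ, ∏ k : Fin n,
        pd * ld (z (S.orderEmbOfFin rfl k)) (u (Fin.castLE hS k))
        ∂Measure.pi (fun _ : Fin p => ν))
      = ∫ u : Fin p → Λ, ∏ i, g i (u i) := by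
        rw [MeasureTheory.volume_pi]; exact integral_congr_ae (Filter.Eventually.of_forall step1)
    _ = ∏ i, ∫ v, g i v := MeasureTheory.integral_fintype_prod_eq_prod g
    _ = (∏ j ∈ S, ∫ v, pd * ld (z j) v ∂ν) * (ν Set.univ).toReal ^ (p - n) := by
        rw [← Finset.prod_mul_prod_compl s (fun i => ∫ v, g i v)]
        congr 1
        · rw [hs, Finset.prod_map]
          have : ∀ k : Fin n, (∫ v, g ((Fin.castLEEmb hS) k) v) =
              ∫ v, pd * ld (z (S.orderEmbOfFin rfl k)) v ∂ν := by
            intro k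
            exact integral_congr_ae (Filter.Eventually.of_forall fun v => hcast k v)
          rw [Finset.prod_congr rfl fun k _ => this k]
          rw [← Finset.prod_coe_sort S (fun j => ∫ v, pd * ld (z j) v ∂ν)]
          exact Fintype.prod_equiv (S.orderIsoOfFin rfl).toEquiv _ _
            (fun k => by rw [← Finset.coe_orderIsoOfFin_apply]; rfl)
        · have hval : ∀ i ∈ sᶜ, (∫ v, g i v) = (ν Set.univ).toReal := by
            intro i hi
            have : ¬ (i : ℕ) < n := fun h => (Finset.mem_compl.1 hi) ((hmem i).2 h)
            rw [hg]
            simp only [dif_neg this]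
            rw [integral_const, smul_eq_mul, mul_one]
            rfl
          rw [Finset.prod_congr rfl hval, Finset.prod_const]
          congr 1
          rw [Finset.card_compl, hs, Finset.card_map, Finset.card_univ, Fintype.card_fin,
            Fintype.card_fin]

lemma jXi_eq (ν : Measure Λ) [IsFiniteMeasure ν] (pd : ℝ) (lc : Λ → ℝ) (ld : Λ → Λ → ℝ)
    (jf : (n : ℕ) → (Fin n → Λ) → ℝ)
    (hjf : ∀ (n : ℕ) (u : Fin n → Λ), jf n u = Real.exp (-(ν Set.univ).toReal))
    {m : ℕ} (z : Fin m → Λ) (T : Finset (Fin m)) :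
    jXi ν lc pd ld jf z T =
      Real.exp (-(ν Set.univ).toReal) * Real.exp ((1 - pd) * (ν Set.univ).toReal) *
        ∏ j ∈ T, (lc (z j) + ∫ u, pd * ld (z j) u ∂ν) := by
  set C := Real.exp (-(ν Set.univ).toReal) with hC
  set M := (ν Set.univ).toReal with hM
  set I : Fin m → ℝ := fun j => ∫ u, pd * ld (z j) u ∂ν with hI
  set r := (1 - pd) * M with hr
  have hsum : ∀ n : ℕ, Summable (fun p : ℕ =>
      if n ≤ p then r ^ (p - n) / (Nat.factorial (p - n) : ℝ) else 0) := by
    intro n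
    apply (summable_nat_add_iff n).mp
    have : (fun p : ℕ => if n ≤ p + n then r ^ (p + n - n) / (Nat.factorial (p + n - n) : ℝ) else 0)
        = fun p : ℕ => r ^ p / (Nat.factorial p : ℝ) := by
      funext p
      rw [if_pos (Nat.le_add_left n p), Nat.add_sub_cancel]
    rw [this]
    exact Real.summable_pow_div_factorial r
  have htsum : ∀ n : ℕ, (∑' p : ℕ,
      if n ≤ p then r ^ (p - n) / (Nat.factorial (p - n) : ℝ) else 0) = Real.exp r := by
    intro n
    rw [← Summable.sum_add_tsum_nat_add n (hsum n)]
    rw [Finset.sum_eq_zero (fun i hi => if_neg (by simp at hi; omega))]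
    rw [zero_add]
    have : (fun p : ℕ => if n ≤ p + n then r ^ (p + n - n) / (Nat.factorial (p + n - n) : ℝ) else 0)
        = fun p : ℕ => r ^ p / (Nat.factorial p : ℝ) := by
      funext p
      rw [if_pos (Nat.le_add_left n p), Nat.add_sub_cancel]
    rw [this, Real.exp_eq_exp_ℝ, NormedSpace.exp_eq_tsum_div]
  have hterm : ∀ (S : Finset (Fin m)) (p : ℕ),
      (if hS : S.card ≤ p then
        (∏ j ∈ T \ S, lc (z j)) *
          ((1 - pd) ^ (p - S.card) / (Nat.factorial (p - S.card) : ℝ)) *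
          ∫ u : Fin p → Λ, jf p u *
            ∏ k : Fin S.card, pd * ld (z (S.orderEmbOfFin rfl k)) (u (Fin.castLE hS k))
            ∂Measure.pi (fun _ : Fin p => ν)
      else 0)
      = (C * (∏ j ∈ T \ S, lc (z j)) * ∏ j ∈ S, I j) *
          (if S.card ≤ p then r ^ (p - S.card) / (Nat.factorial (p - S.card) : ℝ) else 0) := by
    intro S p
    split_ifs with h
    · have hi : (∫ u : Fin p → Λ, jf p u *
          ∏ k : Fin S.card, pd * ld (z (S.orderEmbOfFin rfl k)) (u (Fin.castLE h k))
          ∂Measure.pi (fun _ : Fin p => ν))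
          = C * ((∏ j ∈ S, I j) * M ^ (p - S.card)) := by
        have : ∀ u : Fin p → Λ, jf p u *
            ∏ k : Fin S.card, pd * ld (z (S.orderEmbOfFin rfl k)) (u (Fin.castLE h k))
            = C * ∏ k : Fin S.card, pd * ld (z (S.orderEmbOfFin rfl k)) (u (Fin.castLE h k)) := by
          intro u; rw [hjf]
        rw [integral_congr_ae (Filter.Eventually.of_forall this), integral_const_mul,
          prod_int_eq ν pd ld z S h]
      rw [hi, hr, mul_pow]
      ring
    · simp
  calc jXi ν lc pd ld jf z T
      = ∑' p : ℕ, ∑ S ∈ T.powerset,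
          (C * (∏ j ∈ T \ S, lc (z j)) * ∏ j ∈ S, I j) *
          (if S.card ≤ p then r ^ (p - S.card) / (Nat.factorial (p - S.card) : ℝ) else 0) := by
        unfold jXi
        exact tsum_congr fun p => Finset.sum_congr rfl fun S _ => hterm S p
    _ = ∑ S ∈ T.powerset, ∑' p : ℕ,
          (C * (∏ j ∈ T \ S, lc (z j)) * ∏ j ∈ S, I j) *
          (if S.card ≤ p then r ^ (p - S.card) / (Nat.factorial (p - S.card) : ℝ) else 0) :=
        Summable.tsum_finsetSum (fun S _ => ((hsum S.card).mul_left _))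
    _ = ∑ S ∈ T.powerset, (C * (∏ j ∈ T \ S, lc (z j)) * ∏ j ∈ S, I j) * Real.exp r :=
        Finset.sum_congr rfl fun S _ => by rw [tsum_mul_left, htsum]
    _ = C * Real.exp r * ∏ j ∈ T, (lc (z j) + I j) := by
        have : ∏ j ∈ T, (lc (z j) + I j) = ∑ S ∈ T.powerset,
            (∏ j ∈ S, I j) * ∏ j ∈ T \ S, lc (z j) := by
          rw [← Finset.prod_add]
          exact Finset.prod_congr rfl fun j _ => add_comm _ _
        rw [this, Finset.mul_sum]
        exact Finset.sum_congr rfl fun S _ => by ring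

lemma ups1_eq (ν : Measure Λ) [IsFiniteMeasure ν] (pd : ℝ) (lc : Λ → ℝ) (ld : Λ → Λ → ℝ)
    (jf : (n : ℕ) → (Fin n → Λ) → ℝ)
    (hjf : ∀ (n : ℕ) (u : Fin n → Λ), jf n u = Real.exp (-(ν Set.univ).toReal))
    {m : ℕ} (z : Fin m → Λ) (T : Finset (Fin m)) (x : Λ) :
    ups1 ν lc pd ld jf z T x = jXi ν lc pd ld jf z T := by
  unfold ups1 jXi
  exact tsum_congr fun p => Finset.sum_congr rfl fun S _ => by
    split_ifs with h
    · congr 1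
      exact integral_congr_ae (Filter.Eventually.of_forall fun u => by simp only [hjf])
    · rfl

/-- Poisson prior case: the first-order posterior intensity of `Φ` given the
measurements `Ξ = (z_1,…,z_m)`, defined via the corrector terms as
`μ¹_{Φ|Ξ}(x) = (q_d Υ¹_{z_{1:m}}(x) + Σ_k p_d l_d(z_k|x) Υ¹_{z_{1:m}∖z_k}(x)) / j^(m)_Ξ(z_{1:m})`,
equals `q_d + Σ_k p_d l_d(z_k|x)/(l_c(z_k) + ∫ p_d l_d(z_k|u) ν(du))`. -/
theorem poisson_posterior_intensity (ν : Measure Λ) [IsFiniteMeasure ν]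
    (pd : ℝ) (hpd0 : 0 ≤ pd) (hpd1 : pd ≤ 1)
    (lc : Λ → ℝ) (ld : Λ → Λ → ℝ)
    (hlc : ∀ u, 0 ≤ lc u) (hld : ∀ u v, 0 ≤ ld u v)
    (hint : ∀ u, Integrable (fun v => ld u v) ν)
    (jf : (n : ℕ) → (Fin n → Λ) → ℝ)
    (hjf : ∀ (n : ℕ) (u : Fin n → Λ), jf n u = Real.exp (-(ν Set.univ).toReal))
    {m : ℕ} (z : Fin m → Λ) (hz : Function.Injective z)
    (hpos : ∀ k, 0 < lc (z k) + ∫ u, pd * ld (z k) u ∂ν)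
    (μ : Λ → ℝ)
    (hμ : ∀ x, μ x =
      ((1 - pd) * ups1 ν lc pd ld jf z Finset.univ x +
          ∑ k : Fin m, pd * ld (z k) x * ups1 ν lc pd ld jf z (Finset.univ \ {k}) x)
        / jXi ν lc pd ld jf z Finset.univ) :
    ∀ x, μ x = (1 - pd) +
      ∑ k : Fin m, pd * ld (z k) x / (lc (z k) + ∫ u, pd * ld (z k) u ∂ν) := by

  intro x
  set c : Fin m → ℝ := fun k => lc (z k) + ∫ u, pd * ld (z k) u ∂ν with hcdef
  set E : ℝ := Real.exp (-(ν Set.univ).toReal) * Real.exp ((1 - pd) * (ν Set.univ).toReal)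
    with hE
  have hEpos : 0 < E := mul_pos (Real.exp_pos _) (Real.exp_pos _)
  have hcpos : ∀ k, 0 < c k := hpos
  have hPpos : 0 < ∏ k, c k := Finset.prod_pos fun k _ => hcpos k
  have hT : ∀ T : Finset (Fin m), ups1 ν lc pd ld jf z T x = E * ∏ j ∈ T, c j := by
    intro T
    rw [ups1_eq ν pd lc ld jf hjf z T x, jXi_eq ν pd lc ld jf hjf z T, hE]
  have hJ : jXi ν lc pd ld jf z Finset.univ = E * ∏ j, c j :=
    jXi_eq ν pd lc ld jf hjf z Finset.univ
  rw [hμ x, hJ]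
  simp only [hT]
  rw [div_eq_iff (mul_pos hEpos hPpos).ne', add_mul, Finset.sum_mul]
  congr 1
  refine Finset.sum_congr rfl fun k _ => ?_
  have hsplit : (∏ j, c j) = (∏ j ∈ Finset.univ \ {k}, c j) * c k := by
    rw [Finset.sdiff_singleton_eq_erase]
    exact (Finset.prod_eq_prod_diff_singleton_mul (Finset.mem_univ k) c).trans
      (by rw [Finset.sdiff_singleton_eq_erase])
  rw [hsplit, div_mul_eq_mul_div, eq_div_iff (hcpos k).ne']
  ring
end

section
/- In the Poisson prior case, the second-order posterior factorial moment density satisfies ρ²_{Φ|Ξ=z_{1:m}}(x,y) = q_d² + q_d Σ_{k=1}^m (ℓ_k(x)+ℓ_k(y))/s_k + Σ_{r≠p} ℓ_r(x)ℓ_p(y)/(s_r s_p), where ℓ_k(x) = p_d l_d(z_k|x) and s_k = l_c(z_k) + ∫_Λ p_d l_d(z_k|u) ν(du). -/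
open MeasureTheory Finset

variable {Λ : Type*} [MeasurableSpace Λ]

lemma prod_oemb {α : Type*} [LinearOrder α] (S : Finset α) (f : α → ℝ) :
    ∏ k : Fin S.card, f (S.orderEmbOfFin rfl k) = ∏ j ∈ S, f j := by
  rw [← Finset.prod_coe_sort S f,
    ← (S.orderIsoOfFin rfl).toEquiv.prod_comp (fun x : {x // x ∈ S} => f x.1)]
  refine Finset.prod_congr rfl fun k _ => ?_
  rw [← Finset.coe_orderIsoOfFin_apply]; rfl

lemma tsum_shift_summable (A c : ℝ) (n : ℕ) :
    Summable (fun p : ℕ => if n ≤ p then A * c ^ (p - n) / (Nat.factorial (p - n) : ℝ) else 0) := by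
  set f : ℕ → ℝ := fun p => if n ≤ p then A * c ^ (p - n) / (Nat.factorial (p - n) : ℝ) else 0
  have hj : Function.Injective (fun q : ℕ => q + n) := fun a b h => by simpa using h
  have hr : ∀ x ∉ Set.range (fun q : ℕ => q + n), f x = 0 := by
    intro x hx
    have : ¬ n ≤ x := fun h => hx ⟨x - n, Nat.sub_add_cancel h⟩
    simp [f, this]
  have hfg : (f ∘ fun q : ℕ => q + n) = fun q : ℕ => A * (c ^ q / (Nat.factorial q : ℝ)) := by
    funext q; simp [f, Nat.le_add_left, mul_div_assoc]
  refine (hj.summable_iff hr).mp ?_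
  rw [hfg]
  exact (Real.summable_pow_div_factorial c).mul_left A

lemma tsum_shift (A c : ℝ) (n : ℕ) :
    (∑' p : ℕ, if n ≤ p then A * c ^ (p - n) / (Nat.factorial (p - n) : ℝ) else 0)
      = A * Real.exp c := by
  set f : ℕ → ℝ := fun p => if n ≤ p then A * c ^ (p - n) / (Nat.factorial (p - n) : ℝ) else 0
  have hj : Function.Injective (fun q : ℕ => q + n) := fun a b h => by simpa using h
  have hr : Function.support f ⊆ Set.range (fun q : ℕ => q + n) := by
    intro x hx
    by_contra hc
    have : ¬ n ≤ x := fun h => hc ⟨x - n, Nat.sub_add_cancel h⟩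
    exact hx (by simp [f, this])
  have := hj.tsum_eq hr
  rw [← this]
  have : ∀ q : ℕ, f (q + n) = A * (c ^ q / (Nat.factorial q : ℝ)) := by
    intro q; simp [f, Nat.le_add_left, mul_div_assoc]
  rw [tsum_congr this, tsum_mul_left]
  congr 1
  rw [Real.exp_eq_exp_ℝ, NormedSpace.exp_eq_tsum_div]

lemma integral_helper (ν : Measure Λ) [IsFiniteMeasure ν] (pd : ℝ) (ld : Λ → Λ → ℝ)
    {m : ℕ} (z : Fin m → Λ) (S : Finset (Fin m)) {p : ℕ} (hS : S.card ≤ p) :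
    (∫ u : Fin p → Λ, ∏ k : Fin S.card,
        pd * ld (z (S.orderEmbOfFin rfl k)) (u (Fin.castLE hS k))
        ∂Measure.pi (fun _ : Fin p => ν))
    = (∏ j ∈ S, ∫ v, pd * ld (z j) v ∂ν) * ((ν Set.univ).toReal) ^ (p - S.card) := by
  letI : MeasureSpace Λ := ⟨ν⟩
  haveI : SigmaFinite (volume : Measure Λ) := (inferInstance : SigmaFinite ν)
  set n := S.card with hn
  set G : Fin p → Λ → ℝ := fun i x =>
    if h : (i : ℕ) < n then pd * ld (z (S.orderEmbOfFin rfl ⟨i, h⟩)) x else 1 with hG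
  set e : Fin n ↪ Fin p := (Fin.castLEOrderEmb hS).toEmbedding with he
  have hmem : ∀ i : Fin p, i ∈ Finset.univ.map e ↔ (i : ℕ) < n := by
    intro i
    simp only [Finset.mem_map, Finset.mem_univ, true_and]
    constructor
    · rintro ⟨a, rfl⟩; exact a.2
    · intro h; exact ⟨⟨i, h⟩, rfl⟩
  have key : ∀ u : Fin p → Λ,
      ∏ k : Fin n, pd * ld (z (S.orderEmbOfFin rfl k)) (u (Fin.castLE hS k))
        = ∏ i : Fin p, G i (u i) := by
    intro u
    rw [← Finset.prod_subset (Finset.subset_univ (Finset.univ.map e))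
      (fun i _ hi => by simp only [hG, dif_neg ((hmem i).not.mp hi)]),
      Finset.prod_map]
    refine Finset.prod_congr rfl fun k _ => ?_
    have hk : ((e k : Fin p) : ℕ) < n := k.2
    simp only [hG, dif_pos hk]
    rfl
  rw [integral_congr_ae (Filter.Eventually.of_forall key)]
  have hpi : Measure.pi (fun _ : Fin p => ν) = (volume : Measure (Fin p → Λ)) := rfl
  rw [hpi, MeasureTheory.integral_fintype_prod_volume_eq_prod (ι := Fin p) G]
  have hint : ∀ i : Fin p, (∫ x, G i x) =
      if h : (i : ℕ) < n then ∫ v, pd * ld (z (S.orderEmbOfFin rfl ⟨i, h⟩)) v ∂ν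
      else (ν Set.univ).toReal := by
    intro i
    by_cases h : (i : ℕ) < n
    · simp only [hG, dif_pos h]; rfl
    · simp only [hG, dif_neg h, integral_const, smul_eq_mul, mul_one]; rfl
  simp_rw [hint]
  rw [← Finset.prod_mul_prod_compl (Finset.univ.map e)]
  congr 1
  · rw [Finset.prod_map]
    have : ∀ k : Fin n, (if h : ((e k : Fin p) : ℕ) < n
        then ∫ v, pd * ld (z (S.orderEmbOfFin rfl ⟨(e k : Fin p), h⟩)) v ∂ν
        else (ν Set.univ).toReal) = ∫ v, pd * ld (z (S.orderEmbOfFin rfl k)) v ∂ν := by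
      intro k
      have hk : ((e k : Fin p) : ℕ) < n := k.2
      rw [dif_pos hk]
      have hek : (⟨((e k : Fin p) : ℕ), hk⟩ : Fin n) = k := Fin.ext rfl
      rw [hek]
    rw [Finset.prod_congr rfl fun k _ => this k]
    exact prod_oemb S (fun j => ∫ v, pd * ld (z j) v ∂ν)
  · have : ∀ i ∈ (Finset.univ.map e)ᶜ, (if h : (i : ℕ) < n
        then ∫ v, pd * ld (z (S.orderEmbOfFin rfl ⟨i, h⟩)) v ∂ν
        else (ν Set.univ).toReal) = (ν Set.univ).toReal := by
      intro i hi
      rw [dif_neg ((hmem i).not.mp (Finset.mem_compl.mp hi))]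
    rw [Finset.prod_congr rfl this, Finset.prod_const, Finset.card_compl,
      Finset.card_map, Finset.card_univ, Fintype.card_fin, Fintype.card_fin]

lemma ups2_eq_jXi (ν : Measure Λ) [SigmaFinite ν] (lc : Λ → ℝ) (pd : ℝ)
    (ld : Λ → Λ → ℝ) (jf : (n : ℕ) → (Fin n → Λ) → ℝ)
    (hjf : ∀ (n : ℕ) (u : Fin n → Λ), jf n u = Real.exp (-(ν Set.univ).toReal))
    {m : ℕ} (z : Fin m → Λ) (T : Finset (Fin m)) (x y : Λ) :
    ups2 ν lc pd ld jf z T x y = jXi ν lc pd ld jf z T := by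
  unfold ups2 jXi
  refine tsum_congr fun p => Finset.sum_congr rfl fun S _ => ?_
  by_cases hS : S.card ≤ p
  · rw [dif_pos hS, dif_pos hS]
    simp_rw [hjf]
  · rw [dif_neg hS, dif_neg hS]

lemma jXi_poisson (ν : Measure Λ) [IsFiniteMeasure ν] (lc : Λ → ℝ) (pd : ℝ)
    (ld : Λ → Λ → ℝ) (jf : (n : ℕ) → (Fin n → Λ) → ℝ)
    (hjf : ∀ (n : ℕ) (u : Fin n → Λ), jf n u = Real.exp (-(ν Set.univ).toReal))
    {m : ℕ} (z : Fin m → Λ) (T : Finset (Fin m)) :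
    jXi ν lc pd ld jf z T =
      (Real.exp (-(ν Set.univ).toReal) *
        Real.exp ((1 - pd) * (ν Set.univ).toReal)) *
      ∏ k ∈ T, (lc (z k) + ∫ u, pd * ld (z k) u ∂ν) := by
  set V : ℝ := (ν Set.univ).toReal with hV
  set E : ℝ := Real.exp (-V) with hE
  set c : ℝ := (1 - pd) * V with hc
  set I : Fin m → ℝ := fun k => ∫ u, pd * ld (z k) u ∂ν with hI
  set A : Finset (Fin m) → ℝ := fun S => (∏ j ∈ T \ S, lc (z j)) * E * ∏ j ∈ S, I j with hA
  have hterm : ∀ (p : ℕ) (S : Finset (Fin m)),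
      (if hS : S.card ≤ p then
        (∏ j ∈ T \ S, lc (z j)) *
          ((1 - pd) ^ (p - S.card) / (Nat.factorial (p - S.card) : ℝ)) *
          ∫ u : Fin p → Λ, jf p u *
            ∏ k : Fin S.card, pd * ld (z (S.orderEmbOfFin rfl k)) (u (Fin.castLE hS k))
            ∂Measure.pi (fun _ : Fin p => ν)
      else 0)
      = (if S.card ≤ p then
          A S * c ^ (p - S.card) / (Nat.factorial (p - S.card) : ℝ) else 0) := by
    intro p S
    by_cases hS : S.card ≤ p
    · rw [dif_pos hS, if_pos hS]
      simp_rw [hjf, MeasureTheory.integral_const_mul]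
      rw [integral_helper ν pd ld z S hS, hA, hc, mul_pow]
      ring
    · rw [dif_neg hS, if_neg hS]
  unfold jXi
  simp_rw [hterm]
  rw [Summable.tsum_finsetSum (fun S _ => tsum_shift_summable (A S) c S.card)]
  have : ∀ S ∈ T.powerset,
      (∑' p : ℕ, if S.card ≤ p then A S * c ^ (p - S.card) / (Nat.factorial (p - S.card) : ℝ)
        else 0) = A S * Real.exp c := fun S _ => tsum_shift (A S) c S.card
  rw [Finset.sum_congr rfl this]
  have expand : ∑ S ∈ T.powerset, A S * Real.exp c
      = (E * Real.exp c) * ∑ S ∈ T.powerset, (∏ j ∈ S, I j) * ∏ j ∈ T \ S, lc (z j) := by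
    rw [Finset.mul_sum]
    refine Finset.sum_congr rfl fun S _ => ?_
    rw [hA]; ring
  rw [expand, ← Finset.prod_add]
  congr 1
  exact Finset.prod_congr rfl fun k _ => by rw [add_comm]

/-- Poisson prior case: the second-order posterior factorial moment density of `Φ`
given `Ξ = (z_1,…,z_m)`, defined via the second-order corrector terms, satisfies
`ρ²_{Φ|Ξ}(x,y) = q_d² + q_d Σ_k (ℓ_k(x)+ℓ_k(y))/s_k + Σ_{r≠p} ℓ_r(x)ℓ_p(y)/(s_r s_p)`,
where `ℓ_k(x) = p_d l_d(z_k|x)` and `s_k = l_c(z_k) + ∫ p_d l_d(z_k|u) ν(du)`. -/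
theorem poisson_posterior_second_moment (ν : Measure Λ) [IsFiniteMeasure ν]
    (pd : ℝ) (hpd0 : 0 ≤ pd) (hpd1 : pd ≤ 1)
    (lc : Λ → ℝ) (ld : Λ → Λ → ℝ)
    (hlc : ∀ u, 0 ≤ lc u) (hld : ∀ u v, 0 ≤ ld u v)
    (hint : ∀ u, Integrable (fun v => ld u v) ν)
    (jf : (n : ℕ) → (Fin n → Λ) → ℝ)
    (hjf : ∀ (n : ℕ) (u : Fin n → Λ), jf n u = Real.exp (-(ν Set.univ).toReal))
    {m : ℕ} (z : Fin m → Λ) (hz : Function.Injective z)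
    (hpos : ∀ k, 0 < lc (z k) + ∫ u, pd * ld (z k) u ∂ν)
    (ρ : Λ → Λ → ℝ)
    (hρ : ∀ x y, ρ x y =
      ((1 - pd) ^ 2 * ups2 ν lc pd ld jf z Finset.univ x y +
          (1 - pd) * ∑ k : Fin m, (pd * ld (z k) x + pd * ld (z k) y) *
            ups2 ν lc pd ld jf z (Finset.univ \ {k}) x y +
          ∑ k : Fin m, ∑ k' : Fin m,
            if k ≠ k' then
              (pd * ld (z k) x) * (pd * ld (z k') y) *
                ups2 ν lc pd ld jf z (Finset.univ \ {k, k'}) x y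
            else 0)
        / jXi ν lc pd ld jf z Finset.univ) :
    ∀ x y, ρ x y = (1 - pd) ^ 2 +
      (1 - pd) * (∑ k : Fin m, (pd * ld (z k) x + pd * ld (z k) y) /
        (lc (z k) + ∫ u, pd * ld (z k) u ∂ν)) +
      ∑ k : Fin m, ∑ k' : Fin m,
        if k ≠ k' then
          (pd * ld (z k) x) * (pd * ld (z k') y) /
            ((lc (z k) + ∫ u, pd * ld (z k) u ∂ν) *
              (lc (z k') + ∫ u, pd * ld (z k') u ∂ν))
        else 0 := by
  intro x y
  rw [hρ x y]
  simp only [ups2_eq_jXi ν lc pd ld jf hjf z]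
  set C : ℝ := Real.exp (-(ν Set.univ).toReal) *
    Real.exp ((1 - pd) * (ν Set.univ).toReal) with hCdef
  have hC : 0 < C := mul_pos (Real.exp_pos _) (Real.exp_pos _)
  set s : Fin m → ℝ := fun k => lc (z k) + ∫ u, pd * ld (z k) u ∂ν with hsdef
  have hs : ∀ k, 0 < s k := hpos
  have hval : ∀ T : Finset (Fin m), jXi ν lc pd ld jf z T = C * ∏ k ∈ T, s k :=
    fun T => jXi_poisson ν lc pd ld jf hjf z T
  set P : ℝ := ∏ k : Fin m, s k with hP
  have hPpos : 0 < P := Finset.prod_pos fun k _ => hs k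
  have h1 : ∀ k : Fin m, ∏ j ∈ Finset.univ \ {k}, s j = P / s k := by
    intro k
    rw [eq_div_iff (hs k).ne']
    rw [hP, ← Finset.prod_sdiff (Finset.subset_univ {k})]
    rw [Finset.prod_singleton]
  have h2 : ∀ k k' : Fin m, k ≠ k' →
      ∏ j ∈ Finset.univ \ {k, k'}, s j = P / (s k * s k') := by
    intro k k' hkk
    rw [eq_div_iff (mul_pos (hs k) (hs k')).ne']
    rw [hP, ← Finset.prod_sdiff (Finset.subset_univ {k, k'})]
    rw [Finset.prod_pair hkk]
  have hsum1 : ∑ k : Fin m, (pd * ld (z k) x + pd * ld (z k) y) *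
        jXi ν lc pd ld jf z (Finset.univ \ {k})
      = C * P * ∑ k : Fin m, (pd * ld (z k) x + pd * ld (z k) y) / s k := by
    rw [Finset.mul_sum]
    refine Finset.sum_congr rfl fun k _ => ?_
    rw [hval, h1 k]
    field_simp
  have hsum2 : (∑ k : Fin m, ∑ k' : Fin m,
        if k ≠ k' then
          (pd * ld (z k) x) * (pd * ld (z k') y) *
            jXi ν lc pd ld jf z (Finset.univ \ {k, k'})
        else 0)
      = C * P * ∑ k : Fin m, ∑ k' : Fin m,
          if k ≠ k' then (pd * ld (z k) x) * (pd * ld (z k') y) / (s k * s k')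
          else 0 := by
    rw [Finset.mul_sum]
    refine Finset.sum_congr rfl fun k _ => ?_
    rw [Finset.mul_sum]
    refine Finset.sum_congr rfl fun k' _ => ?_
    by_cases hkk : k ≠ k'
    · rw [if_pos hkk, if_pos hkk, hval, h2 k k' hkk]
      have := (mul_pos (hs k) (hs k')).ne'
      field_simp
    · rw [if_neg hkk, if_neg hkk, mul_zero]
  rw [hsum1, hsum2, hval Finset.univ, ← hP]
  have hCP : C * P ≠ 0 := (mul_pos hC hPpos).ne'
  field_simp
  ring
end

section
/- For a Poisson prior, the posterior covariance on a set A satisfies c²_{Φ|Ξ=z_{1:m}}(A,A) = q_d ν(A) + Σ_{k=1}^m (I_A(z_k)/s_k)(1 − I_A(z_k)/s_k), where I_A(z) = ∫_A p_d l_d(z|x) ν(dx) and s_k = l_c(z_k) + ∫_Λ p_d l_d(z_k|u) ν(du). -/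
open MeasureTheory Finset

/-- Poisson prior case: with posterior intensity
`μ¹_{Φ|Ξ}(x) = q_d + Σ_k ℓ_k(x)/s_k` and posterior second factorial moment density
`ρ²_{Φ|Ξ}(x,y) = q_d² + q_d Σ_k (ℓ_k(x)+ℓ_k(y))/s_k + Σ_{r≠p} ℓ_r(x)ℓ_p(y)/(s_r s_p)`
(`ℓ_k(x) = p_d l_d(z_k|x)`, `s_k = l_c(z_k) + ∫ p_d l_d(z_k|u) ν(du)`), the posterior
covariance `c = μ²(A,A) − (μ¹(A))²` with
`μ²(A,A) = ∫_A μ¹ dν + ∫_{A×A} ρ² dν dν` satisfies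
`c = q_d ν(A) + Σ_k (I_A(z_k)/s_k)(1 − I_A(z_k)/s_k)` where
`I_A(z_k) = ∫_A p_d l_d(z_k|x) ν(dx)`. -/
theorem poisson_posterior_variance {Λ : Type*} [MeasurableSpace Λ]
    (ν : Measure Λ) [IsFiniteMeasure ν]
    (pd : ℝ) (lc : Λ → ℝ) (ld : Λ → Λ → ℝ)
    (m : ℕ) (z : Fin m → Λ)
    (hint : ∀ k, Integrable (fun u => ld (z k) u) ν)
    (s : Fin m → ℝ)
    (hs : ∀ k, s k = lc (z k) + ∫ u, pd * ld (z k) u ∂ν)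
    (μ : Λ → ℝ) (ρ : Λ → Λ → ℝ)
    (hμ : ∀ x, μ x = (1 - pd) + ∑ k, pd * ld (z k) x / s k)
    (hρ : ∀ x y, ρ x y = (1 - pd) ^ 2 +
      (1 - pd) * (∑ k, (pd * ld (z k) x + pd * ld (z k) y) / s k) +
      ∑ k, ∑ k', if k ≠ k' then
        (pd * ld (z k) x) * (pd * ld (z k') y) / (s k * s k') else 0)
    (A : Set Λ) (hA : MeasurableSet A)
    (c : ℝ)
    (hc : c = (∫ x in A, μ x ∂ν) +
        (∫ x in A, (∫ y in A, ρ x y ∂ν) ∂ν) - (∫ x in A, μ x ∂ν) ^ 2) :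
    c = (1 - pd) * (ν A).toReal +
      ∑ k, ((∫ x in A, pd * ld (z k) x ∂ν) / s k) *
        (1 - (∫ x in A, pd * ld (z k) x ∂ν) / s k) := by
  classical
  set V : ℝ := (ν A).toReal with hV
  set I : Fin m → ℝ := fun k => ∫ x in A, pd * ld (z k) x ∂ν with hIdef
  have hι : ∀ k, Integrable (fun x => pd * ld (z k) x) (ν.restrict A) :=
    fun k => ((hint k).const_mul pd).restrict
  -- first moment over A
  have h1 : (∫ x in A, μ x ∂ν) = (1 - pd) * V + ∑ k, I k / s k := by
    have e : (∫ x in A, μ x ∂ν)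
        = ∫ x in A, ((1 - pd) + ∑ k, pd * ld (z k) x / s k) ∂ν := by
      simp only [hμ]
    rw [e, integral_add (integrable_const _)
        (integrable_finset_sum _ fun k _ => (hι k).div_const _),
      integral_finset_sum _ fun k _ => (hι k).div_const _]
    simp only [setIntegral_const, smul_eq_mul, integral_div, hIdef, mul_comm]
    rfl
  -- inner integral of ρ
  have hin : ∀ x, (∫ y in A, ρ x y ∂ν)
      = V * (1 - pd) ^ 2
        + (1 - pd) * ∑ k, (pd * ld (z k) x * V + I k) / s k
        + ∑ k, ∑ k', if k ≠ k' then
            (pd * ld (z k) x) * I k' / (s k * s k') else 0 := by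
    intro x
    have e : (∫ y in A, ρ x y ∂ν)
        = ∫ y in A, ((1 - pd) ^ 2 +
            (1 - pd) * (∑ k, (pd * ld (z k) x + pd * ld (z k) y) / s k) +
            ∑ k, ∑ k', if k ≠ k' then
              (pd * ld (z k) x) * (pd * ld (z k') y) / (s k * s k') else 0) ∂ν := by
      simp only [hρ]
    have iadd : ∀ k : Fin m, Integrable
        (fun y => (pd * ld (z k) x + pd * ld (z k) y) / s k) (ν.restrict A) :=
      fun k => ((integrable_const _).add (hι k)).div_const _
    have i2 : Integrable (fun y =>
        (1 - pd) * (∑ k, (pd * ld (z k) x + pd * ld (z k) y) / s k))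
        (ν.restrict A) :=
      (integrable_finset_sum _ fun k _ => iadd k).const_mul _
    have i3 : Integrable (fun y => ∑ k, ∑ k' : Fin m, if k ≠ k' then
        (pd * ld (z k) x) * (pd * ld (z k') y) / (s k * s k') else 0)
        (ν.restrict A) := by
      refine integrable_finset_sum _ fun k _ => integrable_finset_sum _ fun k' _ => ?_
      by_cases h : k ≠ k'
      · simp only [if_pos h]
        exact ((hι k').const_mul _).div_const _
      · simp only [if_neg h]
        exact integrable_const 0
    have i12 : Integrable (fun y => (1 - pd) ^ 2 +
        (1 - pd) * ∑ k, (pd * ld (z k) x + pd * ld (z k) y) / s k) (ν.restrict A) :=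
      (integrable_const _).add i2
    rw [e, integral_add i12 i3, integral_add (integrable_const _) i2]
    congr 1
    · congr 1
      · simp [smul_eq_mul, mul_comm]
        exact Or.inl rfl
      · rw [integral_const_mul]
        congr 1
        rw [integral_finset_sum _ fun k _ => iadd k]
        refine Finset.sum_congr rfl fun k _ => ?_
        rw [integral_div, integral_add (integrable_const _) (hι k)]
        simp [smul_eq_mul, mul_comm, hIdef]
        rfl
    · rw [integral_finset_sum _ fun k _ => integrable_finset_sum _ fun k' _ => by
        by_cases h : k ≠ k'
        · simp only [if_pos h]
          exact ((hι k').const_mul _).div_const _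
        · simp only [if_neg h]
          exact integrable_const 0]
      · refine Finset.sum_congr rfl fun k _ => ?_
        rw [integral_finset_sum _ fun k' _ => ?_]
        · refine Finset.sum_congr rfl fun k' _ => ?_
          by_cases h : k ≠ k'
          · simp only [if_pos h]
            rw [integral_div, integral_const_mul]
          · simp [h]
        · by_cases h : k ≠ k'
          · simp only [if_pos h]
            exact ((hι k').const_mul _).div_const _
          · simp only [if_neg h]
            exact integrable_const 0
  -- outer integral of ρ
  have h2 : (∫ x in A, (∫ y in A, ρ x y ∂ν) ∂ν)
      = V * (V * (1 - pd) ^ 2)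
        + (1 - pd) * ∑ k, (I k * V + V * I k) / s k
        + ∑ k, ∑ k', if k ≠ k' then I k * I k' / (s k * s k') else 0 := by
    have e : (∫ x in A, (∫ y in A, ρ x y ∂ν) ∂ν)
        = ∫ x in A, (V * (1 - pd) ^ 2
            + (1 - pd) * ∑ k, (pd * ld (z k) x * V + I k) / s k
            + ∑ k, ∑ k', if k ≠ k' then
                (pd * ld (z k) x) * I k' / (s k * s k') else 0) ∂ν := by
      exact integral_congr_ae (Filter.Eventually.of_forall fun x => hin x)
    have iadd : ∀ k : Fin m, Integrable
        (fun x => (pd * ld (z k) x * V + I k) / s k) (ν.restrict A) :=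
      fun k => (((hι k).mul_const _).add (integrable_const _)).div_const _
    have i2 : Integrable (fun x =>
        (1 - pd) * ∑ k, (pd * ld (z k) x * V + I k) / s k) (ν.restrict A) :=
      (integrable_finset_sum _ fun k _ => iadd k).const_mul _
    have i3 : Integrable (fun x => ∑ k, ∑ k' : Fin m, if k ≠ k' then
        (pd * ld (z k) x) * I k' / (s k * s k') else 0) (ν.restrict A) := by
      refine integrable_finset_sum _ fun k _ => integrable_finset_sum _ fun k' _ => ?_
      by_cases h : k ≠ k'
      · simp only [if_pos h]
        exact (((hι k).mul_const _)).div_const _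
      · simp only [if_neg h]
        exact integrable_const 0
    have i12 : Integrable (fun x => V * (1 - pd) ^ 2 +
        (1 - pd) * ∑ k, (pd * ld (z k) x * V + I k) / s k) (ν.restrict A) :=
      (integrable_const _).add i2
    rw [e, integral_add i12 i3, integral_add (integrable_const _) i2]
    congr 1
    · congr 1
      · simp [smul_eq_mul, mul_comm]
        exact Or.inl rfl
      · rw [integral_const_mul]
        congr 1
        rw [integral_finset_sum _ fun k _ => iadd k]
        refine Finset.sum_congr rfl fun k _ => ?_
        rw [integral_div, integral_add ((hι k).mul_const _) (integrable_const _),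
          integral_mul_const]
        simp [smul_eq_mul, hIdef]
        rfl
    · rw [integral_finset_sum _ fun k _ => integrable_finset_sum _ fun k' _ => by
        by_cases h : k ≠ k'
        · simp only [if_pos h]
          exact ((hι k).mul_const _).div_const _
        · simp only [if_neg h]
          exact integrable_const 0]
      · refine Finset.sum_congr rfl fun k _ => ?_
        rw [integral_finset_sum _ fun k' _ => ?_]
        · refine Finset.sum_congr rfl fun k' _ => ?_
          by_cases h : k ≠ k'
          · simp only [if_pos h]
            rw [integral_div, integral_mul_const]
          · simp [h]
        · by_cases h : k ≠ k'
          · simp only [if_pos h]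
            exact ((hι k).mul_const _).div_const _
          · simp only [if_neg h]
            exact integrable_const 0
  -- algebra
  have hsq : (∑ k, I k / s k) ^ 2
      = (∑ k, ∑ k', if k ≠ k' then I k * I k' / (s k * s k') else 0)
        + ∑ k, (I k / s k) ^ 2 := by
    rw [sq, Finset.sum_mul_sum]
    rw [← Finset.sum_add_distrib]
    refine Finset.sum_congr rfl fun k _ => ?_
    have : ∀ k' : Fin m, (I k / s k) * (I k' / s k')
        = (if k ≠ k' then I k * I k' / (s k * s k') else 0)
          + (if k = k' then (I k / s k) ^ 2 else 0) := by
      intro k'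
      by_cases h : k = k'
      · subst h; simp [sq, div_mul_div_comm]
      · simp [h, div_mul_div_comm]
    rw [Finset.sum_congr rfl fun k' _ => this k', Finset.sum_add_distrib]
    congr 1
    simp
  have hmid : (∑ k, (I k * V + V * I k) / s k) = 2 * V * ∑ k, I k / s k := by
    rw [Finset.mul_sum]
    exact Finset.sum_congr rfl fun k _ => by ring
  have expand : ∀ k, I k / s k * (1 - I k / s k) = I k / s k - (I k / s k) ^ 2 := by
    intro k; ring
  rw [hc, h1, h2, hmid]
  change _ = (1 - pd) * V + ∑ k, I k / s k * (1 - I k / s k)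
  simp only [expand, Finset.sum_sub_distrib]
  linear_combination -hsq
end

section
/- In the Poisson prior case, the corrector terms satisfy l¹_{z_{1:m}}(x) = 1 and l¹_{z_{1:m}}(x; z) = 1 / ( l_c(z) + ∫_Λ p_d l_d(z|u) ν(du) ) for each z ∈ z_{1:m}. -/
open MeasureTheory Finset

variable {Λ : Type*} [MeasurableSpace Λ]

lemma integral_pi_prod_castLE (ν : Measure Λ) [IsFiniteMeasure ν] {p s : ℕ} (hS : s ≤ p)
    (g : Fin s → Λ → ℝ) :
    ∫ u : Fin p → Λ, ∏ k : Fin s, g k (u (Fin.castLE hS k)) ∂Measure.pi (fun _ => ν)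
      = (ν Set.univ).toReal ^ (p - s) * ∏ k : Fin s, ∫ v, g k v ∂ν := by
  letI : MeasureSpace Λ := ⟨ν⟩
  haveI : SigmaFinite (volume : Measure Λ) := inferInstanceAs (SigmaFinite ν)
  set F : Fin p → Λ → ℝ := fun i v => if h : (i : ℕ) < s then g ⟨i, h⟩ v else 1 with hF
  have hinj : Function.Injective (Fin.castLE hS) := Fin.castLE_injective hS
  have himg : (Finset.univ.filter (fun i : Fin p => (i : ℕ) < s))
      = Finset.image (Fin.castLE hS) Finset.univ := by
    ext i
    simp only [Finset.mem_filter, Finset.mem_univ, true_and, Finset.mem_image]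
    constructor
    · intro h; exact ⟨⟨i, h⟩, rfl⟩
    · rintro ⟨k, -, rfl⟩; exact k.2
  have key : ∀ u : Fin p → Λ, ∏ i : Fin p, F i (u i) = ∏ k : Fin s, g k (u (Fin.castLE hS k)) := by
    intro u
    rw [← Finset.prod_filter_mul_prod_filter_not Finset.univ (fun i : Fin p => (i : ℕ) < s)]
    rw [Finset.prod_eq_one (fun i hi => dif_neg (Finset.mem_filter.mp hi).2), mul_one, himg,
      Finset.prod_image (fun a _ b _ h => hinj h)]
    exact Finset.prod_congr rfl (fun k _ => by simp [hF])
  have h1 : (Finset.univ.filter fun i : Fin p => (i : ℕ) < s).card = s := by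
    rw [himg, Finset.card_image_of_injective _ hinj, Finset.card_univ, Fintype.card_fin]
  have hcard : (Finset.univ.filter fun i : Fin p => ¬ (i : ℕ) < s).card = p - s := by
    have h2 := Finset.card_filter_add_card_filter_not
      (s := (Finset.univ : Finset (Fin p))) (p := fun i : Fin p => (i : ℕ) < s)
    simp only [Finset.card_univ, Fintype.card_fin] at h2
    omega
  have hmain : ∫ u : Fin p → Λ, ∏ i : Fin p, F i (u i) ∂Measure.pi (fun _ => ν)
      = ∏ i : Fin p, ∫ v, F i v ∂ν :=
    MeasureTheory.integral_fintype_prod_eq_prod F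
  rw [show (fun u : Fin p → Λ => ∏ k : Fin s, g k (u (Fin.castLE hS k)))
      = fun u => ∏ i : Fin p, F i (u i) from funext fun u => (key u).symm, hmain,
    ← Finset.prod_filter_mul_prod_filter_not Finset.univ (fun i : Fin p => (i : ℕ) < s)]
  have hone : ∏ i ∈ Finset.univ.filter (fun i : Fin p => ¬ (i : ℕ) < s), ∫ v, F i v ∂ν
      = (ν Set.univ).toReal ^ (p - s) := by
    rw [Finset.prod_congr rfl (fun i hi => by
      rw [show (fun v => F i v) = fun _ => (1 : ℝ) from
        funext fun v => dif_neg (Finset.mem_filter.mp hi).2, integral_const, smul_eq_mul, mul_one]),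
      Finset.prod_const, hcard, measureReal_def]
  rw [hone, himg, Finset.prod_image (fun a _ b _ h => hinj h), mul_comm]
  congr 1
  exact Finset.prod_congr rfl (fun k _ => by simp [hF])

lemma tsum_shift_aux (r B : ℝ) (s : ℕ) :
    Summable (fun p : ℕ => if s ≤ p then B * (r ^ (p - s) / (Nat.factorial (p - s) : ℝ)) else 0) ∧
    ∑' p : ℕ, (if s ≤ p then B * (r ^ (p - s) / (Nat.factorial (p - s) : ℝ)) else 0)
      = B * ∑' n : ℕ, r ^ n / (Nat.factorial n : ℝ) := by
  set f : ℕ → ℝ := fun p => if s ≤ p then B * (r ^ (p - s) / (Nat.factorial (p - s) : ℝ)) else 0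
    with hf
  have hshift : ∀ n : ℕ, f (n + s) = B * (r ^ n / (Nat.factorial n : ℝ)) := by
    intro n
    simp [hf, Nat.le_add_left, Nat.add_sub_cancel]
  have hsum : Summable f := by
    rw [← summable_nat_add_iff s]
    simp only [hshift]
    exact ((Real.summable_pow_div_factorial r).mul_left B)
  refine ⟨hsum, ?_⟩
  have h0 : ∑ i ∈ Finset.range s, f i = 0 :=
    Finset.sum_eq_zero fun i hi => if_neg (by simpa using Finset.mem_range.mp hi)
  have := Summable.sum_add_tsum_nat_add s hsum
  rw [h0, zero_add] at this
  rw [← this]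
  simp only [hshift]
  exact tsum_mul_left

lemma prod_orderEmbOfFin' {m : ℕ} (S : Finset (Fin m)) (f : Fin m → ℝ) :
    ∏ k : Fin S.card, f (S.orderEmbOfFin rfl k) = ∏ i ∈ S, f i := by
  refine Finset.prod_bij (fun k _ => S.orderEmbOfFin rfl k)
    (fun k _ => S.orderEmbOfFin_mem rfl k)
    (fun a _ b _ h => (S.orderEmbOfFin rfl).injective h)
    (fun i hi => ?_) (fun k _ => rfl)
  have : i ∈ Set.range (S.orderEmbOfFin rfl) := by
    rw [Finset.range_orderEmbOfFin]; exact hi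
  obtain ⟨k, hk⟩ := this
  exact ⟨k, Finset.mem_univ _, hk⟩

lemma jXi_const (ν : Measure Λ) [IsFiniteMeasure ν] (lc : Λ → ℝ) (pd : ℝ) (ld : Λ → Λ → ℝ)
    (jf : (n : ℕ) → (Fin n → Λ) → ℝ) (c : ℝ) (hjf : ∀ n u, jf n u = c)
    {m : ℕ} (z : Fin m → Λ) (T : Finset (Fin m)) :
    jXi ν lc pd ld jf z T
      = c * (∑' n : ℕ, ((1 - pd) * (ν Set.univ).toReal) ^ n / (Nat.factorial n : ℝ))
        * ∏ i ∈ T, (lc (z i) + ∫ u, pd * ld (z i) u ∂ν) := by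
  set V : ℝ := (ν Set.univ).toReal with hV
  set r : ℝ := (1 - pd) * V with hr
  set I : Fin m → ℝ := fun i => ∫ u, pd * ld (z i) u ∂ν with hI
  set f : Finset (Fin m) → ℕ → ℝ := fun S p =>
    if S.card ≤ p then
      ((∏ j ∈ T \ S, lc (z j)) * (∏ i ∈ S, I i) * c) * (r ^ (p - S.card) / (Nat.factorial (p - S.card) : ℝ))
    else 0 with hfdef
  have hterm : ∀ p : ℕ, ∀ S ∈ T.powerset,
      (if hS : S.card ≤ p then
        (∏ j ∈ T \ S, lc (z j)) *
          ((1 - pd) ^ (p - S.card) / (Nat.factorial (p - S.card) : ℝ)) *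
          ∫ u : Fin p → Λ, jf p u *
            ∏ k : Fin S.card, pd * ld (z (S.orderEmbOfFin rfl k)) (u (Fin.castLE hS k))
            ∂Measure.pi (fun _ : Fin p => ν)
      else 0) = f S p := by
    intro p S _
    by_cases hS : S.card ≤ p
    · rw [dif_pos hS, hfdef]
      simp only [if_pos hS]
      have : (fun u : Fin p → Λ => jf p u *
          ∏ k : Fin S.card, pd * ld (z (S.orderEmbOfFin rfl k)) (u (Fin.castLE hS k)))
          = fun u => c * ∏ k : Fin S.card,
              (fun v => pd * ld (z (S.orderEmbOfFin rfl k)) v) (u (Fin.castLE hS k)) := by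
        funext u; rw [hjf]
      rw [this, integral_const_mul,
        show (∫ a : Fin p → Λ, ∏ k : Fin S.card,
            pd * ld (z (S.orderEmbOfFin rfl k)) (a (Fin.castLE hS k))
            ∂Measure.pi (fun _ => ν))
          = V ^ (p - S.card) * ∏ k : Fin S.card, ∫ v, pd * ld (z (S.orderEmbOfFin rfl k)) v ∂ν
          from integral_pi_prod_castLE ν hS (fun k v => pd * ld (z (S.orderEmbOfFin rfl k)) v),
        prod_orderEmbOfFin' S (fun i => ∫ v, pd * ld (z i) v ∂ν)]
      rw [hr, mul_pow]
      ring
    · rw [dif_neg hS, hfdef]; simp [hS]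
  have hsummand : ∀ p : ℕ, (∑ S ∈ T.powerset,
      if hS : S.card ≤ p then
        (∏ j ∈ T \ S, lc (z j)) *
          ((1 - pd) ^ (p - S.card) / (Nat.factorial (p - S.card) : ℝ)) *
          ∫ u : Fin p → Λ, jf p u *
            ∏ k : Fin S.card, pd * ld (z (S.orderEmbOfFin rfl k)) (u (Fin.castLE hS k))
            ∂Measure.pi (fun _ : Fin p => ν)
      else 0) = ∑ S ∈ T.powerset, f S p :=
    fun p => Finset.sum_congr rfl (hterm p)
  have hstep : jXi ν lc pd ld jf z T = ∑' p : ℕ, ∑ S ∈ T.powerset, f S p := by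
    unfold jXi
    exact tsum_congr hsummand
  have hsummable : ∀ S ∈ T.powerset, Summable (f S) := by
    intro S _
    simp only [hfdef]
    exact (tsum_shift_aux r ((∏ j ∈ T \ S, lc (z j)) * (∏ i ∈ S, I i) * c) S.card).1
  have htsum : ∀ S ∈ T.powerset, ∑' p : ℕ, f S p
      = ((∏ j ∈ T \ S, lc (z j)) * (∏ i ∈ S, I i) * c)
        * ∑' n : ℕ, r ^ n / (Nat.factorial n : ℝ) := by
    intro S _
    simp only [hfdef]
    exact (tsum_shift_aux r ((∏ j ∈ T \ S, lc (z j)) * (∏ i ∈ S, I i) * c) S.card).2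
  have hprod : ∏ i ∈ T, (lc (z i) + I i)
      = ∑ S ∈ T.powerset, (∏ i ∈ S, I i) * ∏ j ∈ T \ S, lc (z j) := by
    rw [show (fun i => lc (z i) + I i) = fun i => I i + lc (z i) from funext fun i => add_comm _ _]
    exact Finset.prod_add _ _ _
  rw [hstep, Summable.tsum_finsetSum hsummable, Finset.sum_congr rfl htsum, hprod, Finset.mul_sum]
  exact Finset.sum_congr rfl (fun S _ => by ring)


/-- Poisson prior case: if all Janossy densities of `Φ` equal `exp(−ν(Λ))`, then the
corrector terms satisfy `l¹_{z_{1:m}}(x) = Υ¹_{z_{1:m}}(x)/j^(m)_Ξ(z_{1:m}) = 1` and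
`l¹_{z_{1:m}}(x;z_k) = Υ¹_{z_{1:m}∖z_k}(x)/j^(m)_Ξ(z_{1:m})
  = 1/(l_c(z_k) + ∫ p_d l_d(z_k|u) ν(du))`. -/
theorem poisson_correctors (ν : Measure Λ) [IsFiniteMeasure ν]
    (pd : ℝ) (hpd0 : 0 ≤ pd) (hpd1 : pd ≤ 1)
    (lc : Λ → ℝ) (ld : Λ → Λ → ℝ)
    (hlc : ∀ u, 0 ≤ lc u) (hld : ∀ u v, 0 ≤ ld u v)
    (hint : ∀ u, Integrable (fun v => ld u v) ν)
    (jf : (n : ℕ) → (Fin n → Λ) → ℝ)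
    (hjf : ∀ (n : ℕ) (u : Fin n → Λ), jf n u = Real.exp (-(ν Set.univ).toReal))
    {m : ℕ} (z : Fin m → Λ) (hz : Function.Injective z)
    (hpos : ∀ k, 0 < lc (z k) + ∫ u, pd * ld (z k) u ∂ν)
    (x : Λ) :
    ups1 ν lc pd ld jf z Finset.univ x / jXi ν lc pd ld jf z Finset.univ = 1 ∧
      ∀ k : Fin m,
        ups1 ν lc pd ld jf z (Finset.univ \ {k}) x / jXi ν lc pd ld jf z Finset.univ
          = 1 / (lc (z k) + ∫ u, pd * ld (z k) u ∂ν) := by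
  set V : ℝ := (ν Set.univ).toReal with hV
  set c : ℝ := Real.exp (-V) with hc
  set E : ℝ := ∑' n : ℕ, ((1 - pd) * V) ^ n / (Nat.factorial n : ℝ) with hE
  set I : Fin m → ℝ := fun i => ∫ u, pd * ld (z i) u ∂ν with hI
  have hjXi : ∀ T : Finset (Fin m),
      jXi ν lc pd ld jf z T = c * E * ∏ i ∈ T, (lc (z i) + I i) :=
    fun T => jXi_const ν lc pd ld jf c (fun n u => hjf n u) z T
  have hups : ∀ T : Finset (Fin m),
      ups1 ν lc pd ld jf z T x = c * E * ∏ i ∈ T, (lc (z i) + I i) := by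
    intro T
    have h0 : ups1 ν lc pd ld jf z T x
        = jXi ν lc pd ld (fun p u => jf (p + 1) (Fin.snoc u x)) z T := rfl
    rw [h0]
    exact jXi_const ν lc pd ld _ c (fun n u => hjf _ _) z T
  have hr : 0 ≤ (1 - pd) * V := mul_nonneg (by linarith) ENNReal.toReal_nonneg
  have hEpos : 0 < E := by
    have h1 : (1 : ℝ) ≤ E := by
      have := Summable.le_tsum (Real.summable_pow_div_factorial ((1 - pd) * V)) 0
        (fun n _ => by positivity)
      simpa [hE] using this
    linarith
  have hcpos : 0 < c := Real.exp_pos _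
  have hPpos : ∀ T : Finset (Fin m), 0 < ∏ i ∈ T, (lc (z i) + I i) :=
    fun T => Finset.prod_pos fun i _ => hpos i
  constructor
  · rw [hups, hjXi]
    exact div_self (mul_pos (mul_pos hcpos hEpos) (hPpos _)).ne'
  · intro k
    rw [hups, hjXi]
    have hsplit : ∏ i ∈ (Finset.univ : Finset (Fin m)), (lc (z i) + I i)
        = (lc (z k) + I k) * ∏ i ∈ Finset.univ \ {k}, (lc (z i) + I i) :=
      Finset.prod_eq_mul_prod_sdiff_singleton_of_mem (Finset.mem_univ k) _
    rw [hsplit]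
    have h1 : (0:ℝ) < lc (z k) + I k := hpos k
    have h2 : (0:ℝ) < ∏ i ∈ Finset.univ \ {k}, (lc (z i) + I i) := hPpos _
    rw [div_eq_div_iff (mul_pos (mul_pos hcpos hEpos) (mul_pos h1 h2)).ne' h1.ne']
    ring
end
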